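/- Let K be a field and f₁, f₂ ∈ K[x] nonconstant with a common composite. Suppose c₁, …, c_{2d} ∈ K̄ satisfy f₁(c_i) = f₁(c_{i+1}) for odd i and f₂(c_i) = f₂(c_{i+1}) for even i, with indices taken cyclically (c_{2d+1} = c₁). Then ∏_{i=1}^{d} (m₁(c_{2i−1})/m₂(c_{2i−1})) · (m₂(c_{2i})/m₁(c_{2i})) = 1, where m_j(a) is the multiplicity of a as a root of f_j(x) − f_j(a). -/
import Mathlib

open Polynomial

private lemma rootMult_pow {L : Type*} [Field L] (p : L[X]) (M : ℕ) (a : L) :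
    rootMultiplicity a (p ^ M) = M * rootMultiplicity a p := by
  classical
  rw [← count_roots, ← count_roots, roots_pow, Multiset.count_nsmul]

private lemma comp_mult {L : Type*} [Field L] (p q : L[X]) (hq : q.natDegree ≠ 0) (a : L) :
    rootMultiplicity a (p.comp q - C ((p.comp q).eval a)) =
      rootMultiplicity (q.eval a) (p - C (p.eval (q.eval a))) *
        rootMultiplicity a (q - C (q.eval a)) := by
  classical
  set b := q.eval a with hb
  have hev : (p.comp q).eval a = p.eval b := by rw [eval_comp]
  by_cases hp : p - C (p.eval b) = 0
  · have hpc : p = C (p.eval b) := sub_eq_zero.mp hp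
    rw [hev, hp, rootMultiplicity_zero, zero_mul]
    have : p.comp q - C (p.eval b) = 0 := by rw [hpc]; simp
    rw [this, rootMultiplicity_zero]
  · obtain ⟨u, hu, hnd⟩ := (p - C (p.eval b)).exists_eq_pow_rootMultiplicity_mul_and_not_dvd hp b
    set M := (p - C (p.eval b)).rootMultiplicity b with hM
    have hub : u.eval b ≠ 0 := fun h => hnd (dvd_iff_isRoot.mpr h)
    have hfac : p.comp q - C ((p.comp q).eval a) = (q - C b) ^ M * u.comp q := by
      have h1 : p.comp q - C ((p.comp q).eval a) = (p - C (p.eval b)).comp q := by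
        rw [hev]; simp [sub_comp]
      rw [h1, hu]; simp [mul_comp, pow_comp, sub_comp]
    have huc : (u.comp q).eval a = u.eval b := by rw [eval_comp]
    have huc0 : u.comp q ≠ 0 := fun h => hub (by rw [← huc, h, eval_zero])
    have hqb : q - C b ≠ 0 := fun h => by
      have : q = C b := sub_eq_zero.mp h
      rw [this, natDegree_C] at hq; exact hq rfl
    have hmul : (q - C b) ^ M * u.comp q ≠ 0 :=
      mul_ne_zero (pow_ne_zero _ hqb) huc0
    have h0 : rootMultiplicity a (u.comp q) = 0 :=
      rootMultiplicity_eq_zero (fun h => hub (by rwa [IsRoot, huc] at h))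
    rw [hfac, rootMultiplicity_mul hmul, rootMult_pow, h0, add_zero]

private lemma telescope (v : ℕ → ℚ) (hv : ∀ i, v i ≠ 0) (n : ℕ) :
    ∏ i ∈ Finset.range n, v i / v (i + 1) = v 0 / v n := by
  induction n with
  | zero => simp [div_self (hv 0)]
  | succ n ih =>
    rw [Finset.prod_range_succ, ih, div_mul_div_cancel₀ (hv n)]

theorem stmt_18 (K : Type*) [Field K] (f₁ f₂ : K[X])
    (hf₁ : f₁.natDegree ≠ 0) (hf₂ : f₂.natDegree ≠ 0)
    (hcc : ∃ g₁ g₂ : K[X], g₁.natDegree ≠ 0 ∧ g₂.natDegree ≠ 0 ∧ g₁.comp f₁ = g₂.comp f₂)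
    (F₁ F₂ : (AlgebraicClosure K)[X])
    (hF₁ : F₁ = f₁.map (algebraMap K (AlgebraicClosure K)))
    (hF₂ : F₂ = f₂.map (algebraMap K (AlgebraicClosure K)))
    (m₁ m₂ : AlgebraicClosure K → ℕ)
    (hm₁ : ∀ a, m₁ a = (F₁ - C (F₁.eval a)).rootMultiplicity a)
    (hm₂ : ∀ a, m₂ a = (F₂ - C (F₂.eval a)).rootMultiplicity a)
    (d : ℕ) (hd : 0 < d) (c : ℕ → AlgebraicClosure K)
    (hcyc : c (2 * d + 1) = c 1)
    (hodd : ∀ i, 1 ≤ i → i ≤ 2 * d → Odd i → F₁.eval (c i) = F₁.eval (c (i + 1)))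
    (heven : ∀ i, 1 ≤ i → i ≤ 2 * d → Even i → F₂.eval (c i) = F₂.eval (c (i + 1))) :
    ∏ i ∈ Finset.range d,
      ((m₁ (c (2 * i + 1)) : ℚ) / (m₂ (c (2 * i + 1)) : ℚ)) *
        ((m₂ (c (2 * i + 2)) : ℚ) / (m₁ (c (2 * i + 2)) : ℚ)) = 1 := by
  classical
  obtain ⟨g₁, g₂, hg₁, hg₂, hcomp⟩ := hcc
  set G₁ : (AlgebraicClosure K)[X] := g₁.map (algebraMap K (AlgebraicClosure K)) with hG₁
  set G₂ : (AlgebraicClosure K)[X] := g₂.map (algebraMap K (AlgebraicClosure K)) with hG₂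
  have hGF : G₁.comp F₁ = G₂.comp F₂ := by
    rw [hG₁, hG₂, hF₁, hF₂, ← Polynomial.map_comp, ← Polynomial.map_comp, hcomp]
  have hdF₁ : F₁.natDegree ≠ 0 := by rw [hF₁, natDegree_map]; exact hf₁
  have hdF₂ : F₂.natDegree ≠ 0 := by rw [hF₂, natDegree_map]; exact hf₂
  have hdG₁ : G₁.natDegree ≠ 0 := by rw [hG₁, natDegree_map]; exact hg₁
  have hdG₂ : G₂.natDegree ≠ 0 := by rw [hG₂, natDegree_map]; exact hg₂
  have pos : ∀ (p : (AlgebraicClosure K)[X]), p.natDegree ≠ 0 → ∀ a : AlgebraicClosure K,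
      0 < (p - C (p.eval a)).rootMultiplicity a := by
    intro p hp a
    have hne : p - C (p.eval a) ≠ 0 := fun h => by
      have : p = C (p.eval a) := sub_eq_zero.mp h
      rw [this, natDegree_C] at hp; exact hp rfl
    exact (rootMultiplicity_pos hne).mpr (by simp [IsRoot])
  have hm₁pos : ∀ a, 0 < m₁ a := fun a => by rw [hm₁]; exact pos _ hdF₁ a
  have hm₂pos : ∀ a, 0 < m₂ a := fun a => by rw [hm₂]; exact pos _ hdF₂ a
  set M₁ : AlgebraicClosure K → ℕ :=
    fun b => (G₁ - C (G₁.eval b)).rootMultiplicity b with hMd₁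
  set M₂ : AlgebraicClosure K → ℕ :=
    fun b => (G₂ - C (G₂.eval b)).rootMultiplicity b with hMd₂
  have hM₁pos : ∀ b, 0 < M₁ b := fun b => pos _ hdG₁ b
  have hM₂pos : ∀ b, 0 < M₂ b := fun b => pos _ hdG₂ b
  have key : ∀ a : AlgebraicClosure K, M₁ (F₁.eval a) * m₁ a = M₂ (F₂.eval a) * m₂ a := by
    intro a
    have h1 := comp_mult G₁ F₁ hdF₁ a
    have h2 := comp_mult G₂ F₂ hdF₂ a
    rw [hGF] at h1
    rw [hm₁, hm₂]
    exact h1.symm.trans h2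
  have ratio : ∀ a : AlgebraicClosure K, (m₁ a : ℚ) / (m₂ a : ℚ) =
      (M₂ (F₂.eval a) : ℚ) / (M₁ (F₁.eval a) : ℚ) := by
    intro a
    have h1 : (M₁ (F₁.eval a) : ℚ) * (m₁ a : ℚ) = (M₂ (F₂.eval a) : ℚ) * (m₂ a : ℚ) := by
      exact_mod_cast congrArg (Nat.cast : ℕ → ℚ) (key a)
    rw [div_eq_div_iff (by exact_mod_cast (hm₂pos a).ne') (by exact_mod_cast (hM₁pos _).ne')]
    linarith
  set v : ℕ → ℚ := fun i => (M₂ (F₂.eval (c (2 * i + 1))) : ℚ) with hv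
  have hvne : ∀ i, v i ≠ 0 := fun i => by
    simp only [hv]; exact_mod_cast (hM₂pos _).ne'
  have step : ∀ i ∈ Finset.range d,
      ((m₁ (c (2 * i + 1)) : ℚ) / (m₂ (c (2 * i + 1)) : ℚ)) *
        ((m₂ (c (2 * i + 2)) : ℚ) / (m₁ (c (2 * i + 2)) : ℚ)) = v i / v (i + 1) := by
    intro i hi
    have hid : i < d := Finset.mem_range.mp hi
    have hF1eq : F₁.eval (c (2 * i + 1)) = F₁.eval (c (2 * i + 2)) := by
      have h := hodd (2 * i + 1) (by omega) (by omega) ⟨i, by ring⟩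
      rwa [show 2 * i + 1 + 1 = 2 * i + 2 from rfl] at h
    have hF2eq : F₂.eval (c (2 * i + 2)) = F₂.eval (c (2 * (i + 1) + 1)) := by
      have h := heven (2 * i + 2) (by omega) (by omega) ⟨i + 1, by ring⟩
      rwa [show 2 * i + 2 + 1 = 2 * (i + 1) + 1 by ring] at h
    have r1 := ratio (c (2 * i + 1))
    have r2' : ((m₂ (c (2 * i + 2)) : ℚ) / (m₁ (c (2 * i + 2)) : ℚ)) =
        (M₁ (F₁.eval (c (2 * i + 2))) : ℚ) / (M₂ (F₂.eval (c (2 * i + 2))) : ℚ) := by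
      have h1 : (M₁ (F₁.eval (c (2*i+2))) : ℚ) * (m₁ (c (2*i+2)) : ℚ)
          = (M₂ (F₂.eval (c (2*i+2))) : ℚ) * (m₂ (c (2*i+2)) : ℚ) := by
        exact_mod_cast congrArg (Nat.cast : ℕ → ℚ) (key (c (2 * i + 2)))
      rw [div_eq_div_iff (by exact_mod_cast (hm₁pos _).ne') (by exact_mod_cast (hM₂pos _).ne')]
      linarith
    rw [r1, r2', hF1eq]
    simp only [hv]
    rw [← hF2eq]
    have hM1ne : (M₁ (F₁.eval (c (2 * i + 2))) : ℚ) ≠ 0 := by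
      exact_mod_cast (hM₁pos _).ne'
    have hM2ne : (M₂ (F₂.eval (c (2 * i + 2))) : ℚ) ≠ 0 := by
      exact_mod_cast (hM₂pos _).ne'
    rw [div_mul_div_cancel₀ hM1ne]
  rw [Finset.prod_congr rfl step, telescope v hvne d]
  simp only [hv]
  rw [show 2 * 0 + 1 = 1 from rfl, ← hcyc, div_self (hvne d)]
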